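/- If the promises profile (r,s) is stable (no blocking coalition exists), then the committee decision is to enact the reform: D(r,s) = R. -/

import Mathlib

open Finset

/-- The committee enacts the reform: at least `κ` members vote for it,
where member `i` votes for the reform iff `u i + r i ≥ s i`. -/
def Enacts {I : ℕ} (κ : ℕ) (u r s : Fin I → ℝ) : Prop :=
  κ ≤ (Finset.univ.filter (fun i => s i ≤ u i + r i)).card

/-- Coalition `C` blocks the promises profile `(r, s)`. -/
def Blocks {I : ℕ} (κ : ℕ) (u r s : Fin I → ℝ) (C : Finset (Fin I)) : Prop :=
  (Enacts κ u r s ∧ ∃ s' : Fin I → ℝ, (∑ i, s' i = 0) ∧ (∀ i, s' i ≠ s i ↔ i ∈ C) ∧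
      ¬ Enacts κ u r s' ∧ ∀ i ∈ C, u i + r i < s' i) ∨
  (¬ Enacts κ u r s ∧ ∃ r' : Fin I → ℝ, (∑ i, r' i = 0) ∧ (∀ i, r' i ≠ r i ↔ i ∈ C) ∧
      Enacts κ u r' s ∧ ∀ i ∈ C, s i < u i + r' i)

/-- The profile `(r, s)` is stable: no blocking coalition exists. -/
def StableProfile {I : ℕ} (κ : ℕ) (u r s : Fin I → ℝ) : Prop :=
  ∀ C : Finset (Fin I), ¬ Blocks κ u r s C

/-- a stable promises profile leads the committee to enact the reform. -/
theorem stable_implies_reform {I : ℕ} (κ : ℕ) (hκ : 1 ≤ κ) (hκI : κ ≤ I)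
    (u : Fin I → ℝ) (hmono : Monotone u) (hu : 0 < ∑ i, u i)
    (r s : Fin I → ℝ) (hr : ∑ i, r i = 0) (hs : ∑ i, s i = 0)
    (hstable : StableProfile κ u r s) :
    Enacts κ u r s := by
  by_contra hE
  have hI : 0 < I := lt_of_lt_of_le hκ hκI
  set ε : ℝ := (∑ i, u i) / I with hε
  have hεpos : 0 < ε := div_pos hu (by exact_mod_cast hI)
  set r' : Fin I → ℝ := fun i => s i - u i + ε with hr'
  have hsum : ∑ i, r' i = 0 := by
    simp only [hr', Finset.sum_add_distrib, Finset.sum_sub_distrib, hs,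
      Finset.sum_const, Finset.card_univ, Fintype.card_fin, nsmul_eq_mul, hε]
    field_simp
    ring
  have hall : ∀ i, s i < u i + r' i := by
    intro i; simp only [hr']; linarith [hεpos]
  have hEn : Enacts κ u r' s := by
    unfold Enacts
    have : Finset.univ.filter (fun i => s i ≤ u i + r' i) = Finset.univ := by
      apply Finset.filter_true_of_mem
      intro i _; exact (hall i).le
    rw [this]; simpa using hκI
  exact hstable (Finset.univ.filter (fun i => r' i ≠ r i))
    (Or.inr ⟨hE, r', hsum, fun i => by simp, hEn, fun i _ => hall i⟩)
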